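/- Let Q ∈ ℝ^{N×n} with Q^T Q = I_n and (QQ^T)_{jj} = n/N for all j. Let F be a positive diagonal N×N matrix with diagonal μ_1,...,μ_N, and define F' by F'_{jj} = (N/n)(Q(Q^T F^{−1} Q)^{−1} Q^T)_{jj}. Then trace(F') ≤ trace(F). -/

import Mathlib

open Matrix

private lemma stmt17_aux {N n : ℕ} (X Y : Matrix (Fin N) (Fin n) ℝ)
    (M : Matrix (Fin n) (Fin n) ℝ)
    (hXX : Xᵀ * X = M) (hXY : Xᵀ * Y = 1) (hYX : Yᵀ * X = 1)
    (hiM : M⁻¹ * M = 1) (hMsym : (M⁻¹)ᵀ = M⁻¹) :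
    (M⁻¹).trace ≤ (Yᵀ * Y).trace := by
  have hkey : (Y - X * M⁻¹)ᵀ * (Y - X * M⁻¹) = Yᵀ * Y - M⁻¹ := by
    rw [transpose_sub, transpose_mul, hMsym, Matrix.sub_mul, Matrix.mul_sub,
      Matrix.mul_sub, ← Matrix.mul_assoc Yᵀ X M⁻¹, hYX, Matrix.one_mul,
      Matrix.mul_assoc M⁻¹ Xᵀ Y, hXY, Matrix.mul_one,
      Matrix.mul_assoc M⁻¹ Xᵀ (X * M⁻¹), ← Matrix.mul_assoc Xᵀ X M⁻¹, hXX,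
      ← Matrix.mul_assoc M⁻¹ M M⁻¹, hiM, Matrix.one_mul]
    abel
  have htraceZ : 0 ≤ ((Y - X * M⁻¹)ᵀ * (Y - X * M⁻¹)).trace := by
    rw [Matrix.trace]
    refine Finset.sum_nonneg fun i _ => ?_
    rw [Matrix.diag, Matrix.mul_apply]
    exact Finset.sum_nonneg fun k _ => by
      simp only [Matrix.transpose_apply]; exact mul_self_nonneg _
  rw [hkey, Matrix.trace_sub] at htraceZ
  linarith

theorem stmt17 {N n : ℕ} (hn : 0 < n) (hN : 0 < N)
    (Q : Matrix (Fin N) (Fin n) ℝ) (hQ : Qᵀ * Q = 1)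
    (hrow : ∀ j, (Q * Qᵀ) j j = (n : ℝ) / N)
    (μ : Fin N → ℝ) (hμ : ∀ j, 0 < μ j) :
    ((N : ℝ) / n) *
      (Q * (Qᵀ * diagonal (fun j => (μ j)⁻¹) * Q)⁻¹ * Qᵀ).trace
      ≤ ∑ j, μ j := by
  classical
  have hspos : ∀ j, 0 < Real.sqrt (μ j) := fun j => Real.sqrt_pos.2 (hμ j)
  -- combining diagonal sandwiches
  have comb : ∀ (a b : Fin N → ℝ),
      (diagonal a * Q)ᵀ * (diagonal b * Q) = Qᵀ * diagonal (fun j => a j * b j) * Q := by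
    intro a b
    rw [transpose_mul, diagonal_transpose, Matrix.mul_assoc Qᵀ (diagonal a) (diagonal b * Q),
      ← Matrix.mul_assoc (diagonal a) (diagonal b) Q, diagonal_mul_diagonal,
      ← Matrix.mul_assoc]
  have hXX : (diagonal (fun j => (Real.sqrt (μ j))⁻¹) * Q)ᵀ *
      (diagonal (fun j => (Real.sqrt (μ j))⁻¹) * Q) = Qᵀ * diagonal (fun j => (μ j)⁻¹) * Q := by
    rw [comb]
    have : (fun j => (Real.sqrt (μ j))⁻¹ * (Real.sqrt (μ j))⁻¹) = fun j => (μ j)⁻¹ := by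
      funext j; rw [← mul_inv, Real.mul_self_sqrt (hμ j).le]
    rw [this]
  have hXY : (diagonal (fun j => (Real.sqrt (μ j))⁻¹) * Q)ᵀ *
      (diagonal (fun j => Real.sqrt (μ j)) * Q) = 1 := by
    rw [comb]
    have : (fun j => (Real.sqrt (μ j))⁻¹ * Real.sqrt (μ j)) = fun _ => (1 : ℝ) := by
      funext j; exact inv_mul_cancel₀ (hspos j).ne'
    rw [this, diagonal_one, Matrix.mul_one, hQ]
  have hYX : (diagonal (fun j => Real.sqrt (μ j)) * Q)ᵀ *
      (diagonal (fun j => (Real.sqrt (μ j))⁻¹) * Q) = 1 := by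
    have := congrArg Matrix.transpose hXY
    rwa [transpose_mul, transpose_transpose, transpose_one] at this
  have hYY : (diagonal (fun j => Real.sqrt (μ j)) * Q)ᵀ *
      (diagonal (fun j => Real.sqrt (μ j)) * Q) = Qᵀ * diagonal μ * Q := by
    rw [comb]
    have : (fun j => Real.sqrt (μ j) * Real.sqrt (μ j)) = μ := by
      funext j; exact Real.mul_self_sqrt (hμ j).le
    rw [this]
  -- M is positive definite
  have hDpd : (diagonal (fun j => (μ j)⁻¹) : Matrix (Fin N) (Fin N) ℝ).PosDef :=
    .diagonal fun j => inv_pos.2 (hμ j)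
  have hMsymm : (Qᵀ * diagonal (fun j => (μ j)⁻¹) * Q)ᵀ = Qᵀ * diagonal (fun j => (μ j)⁻¹) * Q := by
    rw [transpose_mul, transpose_mul, transpose_transpose, diagonal_transpose,
      ← Matrix.mul_assoc]
  have hMpd : (Qᵀ * diagonal (fun j => (μ j)⁻¹) * Q).PosDef := by
    refine Matrix.PosDef.of_dotProduct_mulVec_pos ?_ fun x hx => ?_
    · rw [Matrix.IsHermitian, conjTranspose_eq_transpose_of_trivial, hMsymm]
    · have hQx : Q *ᵥ x ≠ 0 := by
        intro h
        apply hx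
        have : (Qᵀ * Q) *ᵥ x = 0 := by
          rw [← Matrix.mulVec_mulVec, h, Matrix.mulVec_zero]
        rwa [hQ, Matrix.one_mulVec] at this
      have h := hDpd.dotProduct_mulVec_pos hQx
      have e1 : star x ⬝ᵥ ((Qᵀ * diagonal (fun j => (μ j)⁻¹) * Q) *ᵥ x)
          = star (Q *ᵥ x) ⬝ᵥ ((diagonal fun j => (μ j)⁻¹) *ᵥ (Q *ᵥ x)) := by
        rw [← Matrix.mulVec_mulVec, ← Matrix.mulVec_mulVec,
          Matrix.dotProduct_mulVec (star x) Qᵀ, Matrix.vecMul_transpose]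
        simp only [star_trivial]
      rw [e1]
      exact h
  have hMunit : IsUnit (Qᵀ * diagonal (fun j => (μ j)⁻¹) * Q) := hMpd.isUnit
  have hdet := (Matrix.isUnit_iff_isUnit_det _).1 hMunit
  have hiM := Matrix.nonsing_inv_mul _ hdet
  have hMsym : ((Qᵀ * diagonal (fun j => (μ j)⁻¹) * Q)⁻¹)ᵀ
      = (Qᵀ * diagonal (fun j => (μ j)⁻¹) * Q)⁻¹ := by
    rw [Matrix.transpose_nonsing_inv, hMsymm]
  have htrM := stmt17_aux (diagonal (fun j => (Real.sqrt (μ j))⁻¹) * Q)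
    (diagonal (fun j => Real.sqrt (μ j)) * Q) _ hXX hXY hYX hiM hMsym
  rw [hYY] at htrM
  -- trace computations
  have htrYY : (Qᵀ * diagonal μ * Q).trace = ∑ j, ((n : ℝ) / N) * μ j := by
    rw [Matrix.trace_mul_cycle Qᵀ (diagonal μ) Q, Matrix.trace]
    simp only [Matrix.diag, Matrix.mul_diagonal]
    exact Finset.sum_congr rfl fun j _ => by rw [hrow j]
  have htrQ : (Q * (Qᵀ * diagonal (fun j => (μ j)⁻¹) * Q)⁻¹ * Qᵀ).trace
      = ((Qᵀ * diagonal (fun j => (μ j)⁻¹) * Q)⁻¹).trace := by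
    rw [Matrix.trace_mul_cycle Q _ Qᵀ, hQ, Matrix.one_mul]
  rw [htrQ]
  rw [htrYY] at htrM
  have hNn : (0:ℝ) < (N : ℝ) / n := by positivity
  have h1 : ((N:ℝ)/n) * ((Qᵀ * diagonal (fun j => (μ j)⁻¹) * Q)⁻¹).trace
      ≤ ((N:ℝ)/n) * ∑ j, ((n:ℝ)/N) * μ j :=
    mul_le_mul_of_nonneg_left htrM hNn.le
  have h2 : ((N:ℝ)/n) * ∑ j, ((n:ℝ)/N) * μ j = ∑ j, μ j := by
    rw [Finset.mul_sum]
    refine Finset.sum_congr rfl fun j _ => ?_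
    have hn' : (n:ℝ) ≠ 0 := Nat.cast_ne_zero.2 hn.ne'
    have hN' : (N:ℝ) ≠ 0 := Nat.cast_ne_zero.2 hN.ne'
    field_simp
  linarith [h2 ▸ h1]
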